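/- Let K be a field, R = K[x_1, …, x_n], fix positive integer weights w_1, …, w_n with d = lcm(w_1, …, w_n), and let M ⊆ R be a monomial ideal with weighted Hilbert function H(k) = #{α in the staircase of M : w(α) = k}. Suppose h(t) = ∑_{j=0}^s h_j t^j ∈ ℤ[t] satisfies (∑_{k≥0} H(k) t^k)·∏_{i=1}^n (1 − t^{w_i}) = h(t), and set r = max{0, s − (w_1 + ⋯ + w_n) + 1}. Let P_0, …, P_{d−1} ∈ ℚ[x] satisfy H_R(k) = P_{k mod d}(k) for all k ≥ 0, where H_R(k) = #{α ∈ ℕ^n : w(α) = k}, and let Q_0, …, Q_{d−1} ∈ ℚ[x] satisfy H(k) = Q_{k mod d}(k) for all k ≥ r. Then Q_{k mod d}(k) = ∑_{j=0}^s h_j · P_{(k−j) mod d}(k − j) for all integers k ≥ r (interpreting P_{m mod d}(m) via the polynomial evaluated at m also when m < 0). -/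

import Mathlib

open Finset Polynomial

lemma aux_geom (m : ℕ) (hm : 0 < m) :
    ((1 : PowerSeries ℤ) - PowerSeries.X ^ m) *
      PowerSeries.mk (fun k => if m ∣ k then (1:ℤ) else 0) = 1 := by
  ext k
  rw [sub_mul, one_mul, map_sub, PowerSeries.coeff_X_pow_mul', PowerSeries.coeff_mk,
    PowerSeries.coeff_one]
  rcases Nat.eq_zero_or_pos k with rfl | hk
  · simp [hm.ne', Nat.not_succ_le_zero]
  · by_cases hmk : m ≤ k
    · have hiff : m ∣ k ↔ m ∣ k - m := by
        constructor
        · intro hd; exact (Nat.dvd_sub hd dvd_rfl)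
        · intro hd; have := Nat.dvd_add hd (dvd_refl m); rwa [Nat.sub_add_cancel hmk] at this
      rw [if_pos hmk, PowerSeries.coeff_mk]
      by_cases hd : m ∣ k
      · rw [if_pos hd, if_pos (hiff.mp hd), if_neg hk.ne', sub_self]
      · rw [if_neg hd, if_neg (fun hc => hd (hiff.mpr hc)), if_neg hk.ne', sub_self]
    · have hd : ¬ m ∣ k := fun hc => hmk (Nat.le_of_dvd hk hc)
      rw [if_neg hmk, if_neg hd, if_neg hk.ne', sub_zero]

lemma sum_ite_eq_ncard {β γ : Type*} (S : Finset β) (p : β → Prop) (inst : DecidablePred p)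
    (T : Set γ) (f : β → γ)
    (hinj : Set.InjOn f (@Finset.filter β p inst S))
    (himg : T = f '' ↑(@Finset.filter β p inst S)) :
    (∑ x ∈ S, @ite ℤ (p x) (inst x) 1 0) = (T.ncard : ℤ) := by
  letI := inst
  rw [himg, Set.ncard_image_of_injOn hinj, Set.ncard_coe_finset,
    Finset.sum_ite, Finset.sum_const_zero, add_zero, Finset.sum_const, nsmul_eq_mul, mul_one]

lemma aux_prod (n : ℕ) (w : Fin n → ℕ) (hw : ∀ i, 0 < w i) (k : ℕ) :
    (PowerSeries.coeff k) (∏ i, PowerSeries.mk (fun j => if w i ∣ j then (1:ℤ) else 0))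
      = (Set.ncard {α : Fin n → ℕ | ∑ i, α i * w i = k} : ℤ) := by
  rw [PowerSeries.coeff_prod]
  simp only [PowerSeries.coeff_mk]
  simp only [Finset.prod_boole]
  refine sum_ite_eq_ncard _ _ _ _ (fun l : (Fin n) →₀ ℕ => fun i => l i / w i) ?_ ?_
  · intro l hl l' hl' hfe
    simp only [Finset.mem_coe, Finset.mem_filter] at hl hl'
    ext i
    have h1 := hl.2 i (Finset.mem_univ i)
    have h2 := hl'.2 i (Finset.mem_univ i)
    have h3 := congrFun hfe i
    simp only at h3
    rw [← Nat.div_mul_cancel h1, ← Nat.div_mul_cancel h2, h3]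
  · ext α
    simp only [Set.mem_setOf_eq, Finset.coe_filter, Set.mem_image,
      Finset.mem_finsuppAntidiag, Set.mem_setOf_eq]
    constructor
    · intro hα
      refine ⟨Finsupp.equivFunOnFinite.symm (fun i => α i * w i), ⟨⟨?_, Finset.subset_univ _⟩,
        fun i _ => ?_⟩, ?_⟩
      · simpa [Finsupp.equivFunOnFinite] using hα
      · simp [Finsupp.equivFunOnFinite]
      · funext i
        simp [Finsupp.equivFunOnFinite, Nat.mul_div_cancel _ (hw i)]
    · rintro ⟨l, ⟨⟨hsum, -⟩, hdvd⟩, rfl⟩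
      have hc : ∀ i, l i / w i * w i = l i := fun i => Nat.div_mul_cancel (hdvd i (Finset.mem_univ i))
      simp only [hc]
      exact hsum

/-- Let `M` be a monomial ideal with weighted Hilbert function `H`, and
`h(t) = ∑_{j=0}^s h_j t^j ∈ ℤ[t]` with `(∑ H(k) t^k)·∏(1 - t^{w_i}) = h(t)`; put
`r = max{0, s - ∑ w_i + 1}`.  If `P_0, …, P_{d-1}` is a quasi-polynomial for the weighted
counting function `H_R` (valid for all `k ≥ 0`) and `Q_0, …, Q_{d-1}` one for `H`
(valid for `k ≥ r`), then `Q_{k mod d}(k) = ∑_{j=0}^s h_j · P_{(k-j) mod d}(k - j)` for all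
`k ≥ r` (evaluating `P` at `k - j` also when `k - j < 0`). -/
theorem stmt_6 (n : ℕ) (hn : 1 ≤ n) (w : Fin n → ℕ) (hw : ∀ i, 0 < w i)
    (d : ℕ) (hd : d = Finset.lcm Finset.univ w)
    (K : Type*) [Field K]
    (M : Ideal (MvPolynomial (Fin n) K))
    (hM : ∃ S : Set (Fin n →₀ ℕ),
      M = Ideal.span ((fun α => MvPolynomial.monomial α (1 : K)) '' S))
    (H : ℕ → ℕ)
    (hH : ∀ k, H k = Set.ncard {α : Fin n →₀ ℕ |
      MvPolynomial.monomial α (1 : K) ∉ M ∧ ∑ i, α i * w i = k})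
    (HR : ℕ → ℕ)
    (hHR : ∀ k, HR k = Set.ncard {α : Fin n → ℕ | ∑ i, α i * w i = k})
    (h : Polynomial ℤ) (s : ℕ) (hs : s = h.natDegree)
    (hser : PowerSeries.mk (fun k => (H k : ℤ)) *
      ((∏ i, (1 - Polynomial.X ^ w i : Polynomial ℤ)) : PowerSeries ℤ) = (h : PowerSeries ℤ))
    (r : ℕ) (hr : r = ((s : ℤ) - (∑ i, w i : ℕ) + 1).toNat)
    (P : ℕ → Polynomial ℚ)
    (hP : ∀ k : ℕ, (HR k : ℚ) = (P (k % d)).eval (k : ℚ))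
    (Q : ℕ → Polynomial ℚ)
    (hQ : ∀ k : ℕ, r ≤ k → (H k : ℚ) = (Q (k % d)).eval (k : ℚ)) :
    ∀ k : ℕ, r ≤ k →
      (Q (k % d)).eval (k : ℚ) =
        ∑ j ∈ Finset.range (s + 1),
          (h.coeff j : ℚ) * (P ((((k : ℤ) - j) % (d : ℤ)).toNat)).eval ((k : ℚ) - j) := by
  -- d is positive
  have hd0 : 0 < d := by
    rcases Nat.eq_zero_or_pos d with h0 | h0
    · exfalso
      rw [h0] at hd
      have := hd.symm
      rw [Finset.lcm_eq_zero_iff] at this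
      obtain ⟨i, -, hi⟩ := this
      exact (hw i).ne' hi
    · exact h0
  -- the geometric series product
  set G : PowerSeries ℤ := PowerSeries.mk (fun k => (HR k : ℤ)) with hG
  have hGprod : (∏ i, PowerSeries.mk (fun j => if w i ∣ j then (1:ℤ) else 0)) = G := by
    ext k
    rw [aux_prod n w hw k, hG, PowerSeries.coeff_mk, hHR]
  have hDG : ((∏ i, (1 - Polynomial.X ^ w i : Polynomial ℤ)) : PowerSeries ℤ) * G = 1 := by
    rw [← hGprod]
    have hcast : ((∏ i, (1 - Polynomial.X ^ w i : Polynomial ℤ)) : PowerSeries ℤ)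
        = ∏ i, ((1 : PowerSeries ℤ) - PowerSeries.X ^ w i) := by
      refine Finset.prod_congr rfl fun i _ => ?_
      push_cast
      rfl
    rw [hcast, ← Finset.prod_mul_distrib]
    rw [Finset.prod_congr rfl (fun i _ => aux_geom (w i) (hw i)), Finset.prod_const_one]
  -- convolution identity
  have hconv : ∀ k : ℕ, (H k : ℤ) = ∑ j ∈ Finset.range (k+1), h.coeff j * (HR (k - j) : ℤ) := by
    intro k
    have hmkH : PowerSeries.mk (fun k => (H k : ℤ)) = (h : PowerSeries ℤ) * G := by
      calc PowerSeries.mk (fun k => (H k : ℤ))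
          = PowerSeries.mk (fun k => (H k : ℤ)) *
            (((∏ i, (1 - Polynomial.X ^ w i : Polynomial ℤ)) : PowerSeries ℤ) * G) := by
            rw [hDG, mul_one]
        _ = (PowerSeries.mk (fun k => (H k : ℤ)) *
            ((∏ i, (1 - Polynomial.X ^ w i : Polynomial ℤ)) : PowerSeries ℤ)) * G :=
            (mul_assoc _ _ _).symm
        _ = (h : PowerSeries ℤ) * G := by rw [hser]
    have := congrArg (PowerSeries.coeff k) hmkH
    rw [PowerSeries.coeff_mk, PowerSeries.coeff_mul] at this
    rw [this, Finset.Nat.sum_antidiagonal_eq_sum_range_succ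
      (fun a b => (PowerSeries.coeff a) (h : PowerSeries ℤ) * (PowerSeries.coeff b) G)]
    refine Finset.sum_congr rfl fun j hj => ?_
    rw [hG, PowerSeries.coeff_mk, Polynomial.coeff_coe]
  -- mod arithmetic helper
  intro k hk
  set c := k % d with hc
  have hcd : (c : ℤ) % (d : ℤ) = (c : ℤ) := by
    have hlt : c < d := Nat.mod_lt _ hd0
    exact Int.emod_eq_of_lt (by positivity) (by exact_mod_cast hlt)
  have hmod : ∀ m : ℕ, m % d = c → ∀ j : ℕ, ((m : ℤ) - j) % d = ((c : ℤ) - j) % d := by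
    intro m hm j
    have h1 : (m : ℤ) % d = (c : ℤ) % d := by
      rw [hcd, ← hm]
      exact (Int.natCast_mod m d).symm
    rw [Int.sub_emod, h1, ← Int.sub_emod]
  -- the comparison polynomial
  set F : Polynomial ℚ := ∑ j ∈ Finset.range (s+1),
    Polynomial.C ((h.coeff j : ℚ)) *
      (P ((((c : ℤ) - j) % (d : ℤ)).toNat)).comp (Polynomial.X - Polynomial.C (j : ℚ)) with hF
  have hFeval : ∀ x : ℚ, F.eval x = ∑ j ∈ Finset.range (s+1),
      (h.coeff j : ℚ) * (P ((((c : ℤ) - j) % (d : ℤ)).toNat)).eval (x - j) := by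
    intro x
    rw [hF, Polynomial.eval_finset_sum]
    refine Finset.sum_congr rfl fun j hj => ?_
    rw [Polynomial.eval_mul, Polynomial.eval_C, Polynomial.eval_comp, Polynomial.eval_sub,
      Polynomial.eval_X, Polynomial.eval_C]
  -- agreement on large arithmetic progression
  have hagree : ∀ m : ℕ, r ≤ m → s ≤ m → m % d = c → (Q c).eval (m : ℚ) = F.eval (m : ℚ) := by
    intro m hrm hsm hm
    have h1 : (Q c).eval (m : ℚ) = (H m : ℚ) := by rw [← hm]; exact (hQ m hrm).symm
    rw [h1, hFeval]
    have h2 : (H m : ℚ) = ∑ j ∈ Finset.range (m+1), (h.coeff j : ℚ) * (HR (m - j) : ℚ) := by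
      exact_mod_cast congrArg (fun z : ℤ => (z : ℚ)) (hconv m)
    rw [h2]
    rw [← Finset.sum_subset (Finset.range_subset_range.mpr (Nat.succ_le_succ hsm))]
    swap
    · intro j hj hj2
      rw [Finset.mem_range] at hj hj2
      have : h.natDegree < j := by omega
      rw [Polynomial.coeff_eq_zero_of_natDegree_lt this]
      push_cast
      ring
    refine Finset.sum_congr rfl fun j hj => ?_
    rw [Finset.mem_range] at hj
    have hjm : j ≤ m := le_trans (Nat.lt_succ_iff.mp hj) hsm
    congr 1
    have hPm := hP (m - j)
    have hcast : ((m - j : ℕ) : ℚ) = (m : ℚ) - j := by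
      push_cast [Nat.cast_sub hjm]; ring
    have hmodidx : (m - j) % d = ((((c : ℤ) - j) % (d : ℤ)).toNat) := by
      have e1 : ((c : ℤ) - j) % d = ((m : ℤ) - j) % d := (hmod m hm j).symm
      have e2 : ((m : ℤ) - j) = ((m - j : ℕ) : ℤ) := by omega
      rw [e1, e2]
      rw [← Int.natCast_mod, Int.toNat_natCast]
    rw [hmodidx, hcast] at hPm
    exact hPm
  -- infinitely many agreement points force polynomial equality
  have hQF : Q c = F := by
    apply Polynomial.eq_of_infinite_eval_eq
    have hsub : Set.range (fun t : ℕ => ((k + d * (s + t) : ℕ) : ℚ)) ⊆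
        {x | Polynomial.eval x (Q c) = Polynomial.eval x F} := by
      rintro x ⟨t, rfl⟩
      have hm1 : r ≤ k + d * (s + t) := le_trans hk (Nat.le_add_right _ _)
      have hm2 : s ≤ k + d * (s + t) := by nlinarith [hd0]
      have hm3 : (k + d * (s + t)) % d = c := by
        rw [hc, Nat.add_mul_mod_self_left]
      exact hagree _ hm1 hm2 hm3
    refine Set.Infinite.mono hsub ?_
    apply Set.infinite_range_of_injective
    intro a b hab
    simp only at hab
    have h4 : (k + d * (s + a) : ℕ) = (k + d * (s + b) : ℕ) := by exact_mod_cast hab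
    have := Nat.eq_of_mul_eq_mul_left hd0 (by omega : d * (s + a) = d * (s + b))
    omega
  rw [hQF, hFeval]
  refine Finset.sum_congr rfl fun j hj => ?_
  rw [hmod k rfl j]
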